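/- For any Borel probability measures σ, μ₁, μ₂ on ℝ, one has 𝔸^∨_σ(μ₁ ⊠∨ μ₂) = 𝔸^∨_σ(μ₁) ⊠∨ 𝔸^∨_σ(μ₂), i.e., the subordination operation is a homomorphism with respect to free max-convolution. -/

import Mathlib

open MeasureTheory ProbabilityTheory Filter Topology

/-- The subordination distribution function for free max-convolution:
`max {1 - (1 - Fμ)/Fσ, 0}`, set to `0` where `Fσ = 0`. -/
noncomputable def subFn (Fμ Fσ : ℝ → ℝ) (x : ℝ) : ℝ :=
  if Fσ x = 0 then 0 else max (1 - (1 - Fμ x) / Fσ x) 0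

lemma subordination_key (s a b : ℝ) (hs0 : 0 < s) (hs1 : s ≤ 1)
    (ha1 : a ≤ 1) (hb1 : b ≤ 1) :
    max (1 - (1 - max (a + b - 1) 0) / s) 0 =
      max (max (1 - (1 - a) / s) 0 + max (1 - (1 - b) / s) 0 - 1) 0 := by
  have hA1 : max (1 - (1 - a) / s) 0 ≤ 1 :=
    max_le (by have := div_nonneg (by linarith : (0:ℝ) ≤ 1-a) hs0.le; linarith) one_pos.le
  have hB1 : max (1 - (1 - b) / s) 0 ≤ 1 :=
    max_le (by have := div_nonneg (by linarith : (0:ℝ) ≤ 1-b) hs0.le; linarith) one_pos.le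
  rcases le_total (a + b) 1 with h | h
  · rw [show max (a + b - 1) 0 = 0 from max_eq_right (by linarith)]
    rw [show max (1 - (1 - 0) / s) 0 = 0 from max_eq_right (by
      have : (1:ℝ) ≤ 1 / s := (le_div_iff₀ hs0).2 (by linarith); linarith)]
    symm
    rw [max_eq_right]
    rcases le_total (1 - (1 - a) / s) 0 with h1 | h1 <;>
      rcases le_total (1 - (1 - b) / s) 0 with h2 | h2
    · rw [max_eq_right h1, max_eq_right h2]; norm_num
    · rw [max_eq_right h1, max_eq_left h2, zero_add]
      have := div_nonneg (by linarith : (0:ℝ) ≤ 1-b) hs0.le; linarith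
    · rw [max_eq_left h1, max_eq_right h2, add_zero]
      have := div_nonneg (by linarith : (0:ℝ) ≤ 1-a) hs0.le; linarith
    · rw [max_eq_left h1, max_eq_left h2]
      have hab : s ≤ ((1-a)+(1-b)) := by linarith
      have : 1 ≤ ((1-a)+(1-b))/s := (le_div_iff₀ hs0).2 (by linarith)
      have hd : (1-a)/s + (1-b)/s = ((1-a)+(1-b))/s := (add_div _ _ _).symm
      linarith
  · rw [show max (a + b - 1) 0 = a + b - 1 from max_eq_left (by linarith)]
    rcases le_total (1 - a) s with h1 | h1 <;> rcases le_total (1 - b) s with h2 | h2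
    · rw [show max (1 - (1 - a) / s) 0 = 1 - (1 - a) / s from max_eq_left (by
        rw [sub_nonneg, div_le_one hs0]; linarith),
        show max (1 - (1 - b) / s) 0 = 1 - (1 - b) / s from max_eq_left (by
        rw [sub_nonneg, div_le_one hs0]; linarith)]
      congr 1
      field_simp
      ring
    · rw [show max (1 - (1 - b) / s) 0 = 0 from max_eq_right (by
        rw [sub_nonpos, le_div_iff₀ hs0, one_mul]; linarith), add_zero]
      rw [show max (max (1 - (1 - a) / s) 0 - 1) 0 = 0 from max_eq_right (by linarith)]
      rw [max_eq_right]
      rw [sub_nonpos, le_div_iff₀ hs0, one_mul]; linarith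
    · rw [show max (1 - (1 - a) / s) 0 = 0 from max_eq_right (by
        rw [sub_nonpos, le_div_iff₀ hs0, one_mul]; linarith), zero_add]
      rw [show max (max (1 - (1 - b) / s) 0 - 1) 0 = 0 from max_eq_right (by linarith)]
      rw [max_eq_right]
      rw [sub_nonpos, le_div_iff₀ hs0, one_mul]; linarith
    · rw [show max (1 - (1 - a) / s) 0 = 0 from max_eq_right (by
        rw [sub_nonpos, le_div_iff₀ hs0, one_mul]; linarith),
        show max (1 - (1 - b) / s) 0 = 0 from max_eq_right (by
        rw [sub_nonpos, le_div_iff₀ hs0, one_mul]; linarith)]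
      rw [show max ((0:ℝ) + 0 - 1) 0 = 0 from max_eq_right (by norm_num)]
      rw [max_eq_right]
      rw [sub_nonpos, le_div_iff₀ hs0, one_mul]; linarith

theorem subordination_freeMaxConv_hom (σ μ₁ μ₂ : Measure ℝ)
    [IsProbabilityMeasure σ] [IsProbabilityMeasure μ₁] [IsProbabilityMeasure μ₂]
    (m A₁ A₂ L R : Measure ℝ)
    [IsProbabilityMeasure m] [IsProbabilityMeasure A₁] [IsProbabilityMeasure A₂]
    [IsProbabilityMeasure L] [IsProbabilityMeasure R]
    -- m = μ₁ ⊠∨ μ₂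
    (hm : ∀ x, cdf m x = max (cdf μ₁ x + cdf μ₂ x - 1) 0)
    -- L = 𝔸^∨_σ(μ₁ ⊠∨ μ₂)
    (hL : ∀ x, cdf L x = subFn (cdf m) (cdf σ) x)
    -- A₁ = 𝔸^∨_σ(μ₁), A₂ = 𝔸^∨_σ(μ₂)
    (hA₁ : ∀ x, cdf A₁ x = subFn (cdf μ₁) (cdf σ) x)
    (hA₂ : ∀ x, cdf A₂ x = subFn (cdf μ₂) (cdf σ) x)
    -- R = 𝔸^∨_σ(μ₁) ⊠∨ 𝔸^∨_σ(μ₂)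
    (hR : ∀ x, cdf R x = max (cdf A₁ x + cdf A₂ x - 1) 0) :
    L = R := by
  have hcdf : ∀ x, cdf L x = cdf R x := by
    intro x
    rw [hL, hR, hA₁, hA₂, subFn, subFn, subFn, hm]
    by_cases hs : cdf σ x = 0
    · simp [hs]
    · have hs0 : 0 < cdf σ x := lt_of_le_of_ne (cdf_nonneg σ x) (Ne.symm hs)
      simp only [if_neg hs]
      exact subordination_key _ _ _ hs0 (cdf_le_one σ x) (cdf_le_one μ₁ x) (cdf_le_one μ₂ x)
  refine Measure.ext_of_Iic L R fun x ↦ ?_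
  rw [← ofReal_cdf L x, ← ofReal_cdf R x, hcdf x]
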